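/- For every integer m ≥ 1, every real p > 0 with p ≠ 1, and all real U_1, …, U_m with U_i ∉ {0, 1} for each i: I_m(p^{−1}; U_1^{−1}, …, U_m^{−1}) = (−1)^m · p^{binom(m+1,2)} · I_m(p; U_1, …, U_m), where binom(m+1,2) = m(m+1)/2. In other words, inverting p and all the variables U_i multiplies the Igusa factor I_m by (−1)^m p^{m(m+1)/2}. -/

import Mathlib

open Finset

noncomputable section

/-- Gaussian binomial coefficient `binom(M,k)_q = ∏_{j=1}^k (q^{M-k+j}-1)/(q^j-1)`. -/
def gb (q : ℝ) (M k : ℕ) : ℝ :=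
  ∏ j ∈ range k, (q ^ (M - k + (j + 1)) - 1) / (q ^ (j + 1) - 1)

/-- Auxiliary recursion for the number of flags of codimension type `I`. -/
def bAux (q : ℝ) (m : ℕ) : ℕ → List ℕ → ℝ
  | _, [] => 1
  | prev, i :: rest => gb q (m + 1 - prev) (i - prev) * bAux q m i rest

/-- `b^m_I(q)`, the flag-counting polynomial attached to `I ⊆ {1,…,m}`. -/
def bI (q : ℝ) (m : ℕ) (I : Finset ℕ) : ℝ := bAux q m 0 (I.sort (· ≤ ·))

/-- The Igusa factor `I_m(p; U_1,…,U_m) = Σ_{I⊆{1,…,m}} b^m_I(p⁻¹) ∏_{i∈I} U_i/(1−U_i)`. -/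
def igusa (p : ℝ) (m : ℕ) (U : ℕ → ℝ) : ℝ :=
  ∑ I ∈ (Icc 1 m).powerset, bI p⁻¹ m I * ∏ i ∈ I, U i / (1 - U i)

def fac (q : ℝ) (n : ℕ) : ℝ := ∏ j ∈ range n, (q ^ (j + 1) - 1)

section facts
variable {q : ℝ} (hq : 0 < q) (hq1 : q ≠ 1)

include hq hq1 in
lemma pow_ne_one' (n : ℕ) : q ^ (n + 1) ≠ 1 := by
  rcases lt_or_gt_of_ne hq1 with h | h
  · exact ne_of_lt (pow_lt_one₀ (le_of_lt hq) h (Nat.succ_ne_zero n))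
  · exact ne_of_gt (one_lt_pow₀ h (Nat.succ_ne_zero n))

include hq hq1 in
lemma sub_ne' (n : ℕ) : q ^ (n + 1) - 1 ≠ 0 :=
  sub_ne_zero.mpr (pow_ne_one' hq hq1 n)

include hq hq1 in
lemma fac_ne_zero (n : ℕ) : fac q n ≠ 0 :=
  Finset.prod_ne_zero_iff.mpr fun j _ => sub_ne' hq hq1 j

lemma fac_succ (n : ℕ) : fac q (n + 1) = fac q n * (q ^ (n + 1) - 1) := by
  rw [fac, prod_range_succ]; rfl

lemma fac_zero : fac q 0 = 1 := by simp [fac]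

include hq hq1 in
lemma gb_eq {M k : ℕ} (h : k ≤ M) :
    gb q M k = fac q M / (fac q k * fac q (M - k)) := by
  have hnum : fac q M = fac q (M - k) * ∏ j ∈ range k, (q ^ (M - k + (j + 1)) - 1) := by
    conv_lhs => rw [show M = (M - k) + k by omega]
    rw [fac, prod_range_add]
    rfl
  have h2 : fac q (M - k) ≠ 0 := fac_ne_zero hq hq1 (M - k)
  rw [gb, prod_div_distrib, hnum, mul_comm (fac q k) (fac q (M - k)),
    mul_div_mul_left _ _ h2, fac]

lemma gb_zero (M : ℕ) : gb q M 0 = 1 := by simp [gb]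

include hq hq1 in
lemma gb_self (M : ℕ) : gb q M M = 1 := by
  rw [gb_eq hq hq1 le_rfl, Nat.sub_self, fac_zero, mul_one,
    div_self (fac_ne_zero hq hq1 M)]

include hq hq1 in
lemma gb_symm {M k : ℕ} (h : k ≤ M) : gb q M (M - k) = gb q M k := by
  rw [gb_eq hq hq1 h, gb_eq hq hq1 (Nat.sub_le M k), Nat.sub_sub_self h, mul_comm]

include hq hq1 in
lemma gb_pascal {n k : ℕ} (h : k < n) :
    gb q (n + 1) (k + 1) = gb q n k + q ^ (k + 1) * gb q n (k + 1) := by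
  obtain ⟨d, hd⟩ : ∃ d, n = k + d + 1 := ⟨n - k - 1, by omega⟩
  subst hd
  rw [gb_eq hq hq1 (by omega), gb_eq hq hq1 (by omega), gb_eq hq hq1 (by omega)]
  rw [show k + d + 1 + 1 - (k + 1) = d + 1 by omega, show k + d + 1 - k = d + 1 by omega,
    show k + d + 1 - (k + 1) = d by omega]
  rw [show (k + d + 1 + 1) = (k + d + 1) + 1 from rfl, fac_succ (q := q) (k + d + 1),
    fac_succ (q := q) k, fac_succ (q := q) d]
  rw [show k + d + 1 + 1 = (k + 1) + (d + 1) by omega, pow_add]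
  have h1 := fac_ne_zero hq hq1 k
  have h2 := fac_ne_zero hq hq1 d
  have h3 := fac_ne_zero hq hq1 (k + d + 1)
  have h4 := sub_ne' hq hq1 k
  have h5 := sub_ne' hq hq1 d
  field_simp
  ring

include hq hq1 in
lemma gb_chain {n c j : ℕ} (hcj : c ≤ j) (hjn : j ≤ n) :
    gb q n c * gb q (n - c) (j - c) = gb q n j * gb q j c := by
  rw [gb_eq hq hq1 (le_trans hcj hjn), gb_eq hq hq1 (by omega),
    gb_eq hq hq1 hjn, gb_eq hq hq1 hcj]
  rw [show n - c - (j - c) = n - j by omega]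
  have h1 := fac_ne_zero hq hq1 c
  have h2 := fac_ne_zero hq hq1 (j - c)
  have h3 := fac_ne_zero hq hq1 (n - j)
  have h4 := fac_ne_zero hq hq1 j
  have h5 := fac_ne_zero hq hq1 (n - c)
  field_simp

include hq hq1 in
lemma gb_inv {M k : ℕ} (h : k ≤ M) :
    gb q⁻¹ M k = gb q M k / q ^ (k * (M - k)) := by
  have hq0 : q ≠ 0 := ne_of_gt hq
  have hqi : (0:ℝ) < q⁻¹ := inv_pos.mpr hq
  have hqi1 : q⁻¹ ≠ (1:ℝ) := fun hh => hq1 (by rw [← inv_inv q, hh, inv_one])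
  have key : ∀ a b : ℕ, ((q⁻¹) ^ (a + 1) - 1) / ((q⁻¹) ^ (b + 1) - 1)
      = q ^ (b + 1) * (q ^ (a + 1) - 1) / (q ^ (a + 1) * (q ^ (b + 1) - 1)) := by
    intro a b
    have h2 := sub_ne' hq hq1 b
    have h3 : q ^ (a + 1) ≠ 0 := pow_ne_zero _ hq0
    have h4 : q ^ (b + 1) ≠ 0 := pow_ne_zero _ hq0
    have e : ∀ A : ℕ, (q ^ (A + 1))⁻¹ - 1 = -((q ^ (A + 1) - 1) / q ^ (A + 1)) := by
      intro A; field_simp; ring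
    rw [inv_pow, inv_pow, e a, e b, neg_div_neg_eq,
      div_eq_div_iff (div_ne_zero h2 h4) (mul_ne_zero h3 h2)]
    field_simp
  rw [gb, gb]
  have hc : ∀ j ∈ range k, ((q⁻¹) ^ (M - k + (j + 1)) - 1) / ((q⁻¹) ^ (j + 1) - 1)
      = (1 / q ^ (M - k)) * ((q ^ (M - k + (j + 1)) - 1) / (q ^ (j + 1) - 1)) := by
    intro j _
    have hkey := key (M - k + j) j
    rw [show M - k + j + 1 = M - k + (j + 1) by omega] at hkey
    have h2 := sub_ne' hq hq1 j
    have h3 : q ^ (j + 1) ≠ 0 := pow_ne_zero _ hq0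
    have h4 : q ^ (M - k) ≠ 0 := pow_ne_zero _ hq0
    rw [hkey, div_mul_div_comm, one_mul,
      show q ^ (M - k + (j + 1)) = q ^ (M - k) * q ^ (j + 1) from pow_add q _ _,
      div_eq_div_iff (mul_ne_zero (mul_ne_zero h4 h3) h2) (mul_ne_zero h4 h2)]
    ring
  rw [prod_congr rfl hc, prod_mul_distrib, prod_const, card_range]
  rw [div_pow, one_pow, ← pow_mul, mul_comm (M - k) k]
  rw [div_mul_eq_mul_div, one_mul, ← gb]
end facts

def tri (n : ℕ) : ℕ := n * (n + 1) / 2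

lemma tri_succ (n : ℕ) : tri (n + 1) = tri n + (n + 1) := by
  show (n + 1) * (n + 1 + 1) / 2 = n * (n + 1) / 2 + (n + 1)
  have h : (n + 1) * (n + 1 + 1) = n * (n + 1) + 2 * (n + 1) := by ring
  have hd : 2 ∣ n * (n + 1) := (Nat.even_mul_succ_self n).two_dvd
  omega

lemma tri_add (a d : ℕ) : tri a + tri d + (a + 1) * (d + 1) = tri (a + d + 1) := by
  show a * (a + 1) / 2 + d * (d + 1) / 2 + (a + 1) * (d + 1) = (a + d + 1) * (a + d + 1 + 1) / 2
  have h : (a + d + 1) * (a + d + 1 + 1) = a * (a + 1) + d * (d + 1) + 2 * ((a + 1) * (d + 1)) := by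
    ring
  have h1 : 2 ∣ a * (a + 1) := (Nat.even_mul_succ_self a).two_dvd
  have h2 : 2 ∣ d * (d + 1) := (Nat.even_mul_succ_self d).two_dvd
  omega

lemma tri_zero : tri 0 = 0 := rfl

-- list/sort lemmas
lemma bAux_nil (q : ℝ) (m prev : ℕ) : bAux q m prev [] = 1 := rfl

lemma bAux_cons (q : ℝ) (m prev i : ℕ) (rest : List ℕ) :
    bAux q m prev (i :: rest) = gb q (m + 1 - prev) (i - prev) * bAux q m i rest := rfl

lemma bAux_shift (q : ℝ) (m c : ℕ) (hcm : c ≤ m) :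
    ∀ (L : List ℕ) (i : ℕ), c ≤ i → (∀ x ∈ L, c ≤ x) →
      bAux q m i L = bAux q (m - c) (i - c) (L.map (· - c)) := by
  intro L
  induction L with
  | nil => intro i _ _; rfl
  | cons a rest ih =>
    intro i hci hL
    rw [List.map_cons, bAux_cons, bAux_cons]
    rw [show m - c + 1 - (i - c) = m + 1 - i by omega, show a - c - (i - c) = a - i by omega]
    rw [ih a (hL a List.mem_cons_self) (fun x hx => hL x (List.mem_cons_of_mem a hx))]

lemma sort_insert_lt {j : ℕ} {T : Finset ℕ} (h : ∀ x ∈ T, j < x) :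
    (insert j T).sort (· ≤ ·) = j :: T.sort (· ≤ ·) :=
  Finset.sort_insert _ (fun b hb => le_of_lt (h b hb)) (fun hj => absurd (h j hj) (lt_irrefl j))

lemma sort_image_sub {j : ℕ} {T : Finset ℕ} (h : ∀ x ∈ T, j ≤ x) :
    (T.image (· - j)).sort (· ≤ ·) = (T.sort (· ≤ ·)).map (· - j) := by
  have hinj : ∀ x ∈ T.sort (· ≤ ·), ∀ y ∈ T.sort (· ≤ ·), x - j = y - j → x = y := by
    intro x hx y hy hxy
    have hx' := h x ((Finset.mem_sort _).mp hx)
    have hy' := h y ((Finset.mem_sort _).mp hy)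
    omega
  have hperm : List.Perm ((T.image (· - j)).sort (· ≤ ·)) ((T.sort (· ≤ ·)).map (· - j)) := by
    apply List.perm_of_nodup_nodup_toFinset_eq (Finset.sort_nodup _ _)
    · exact List.Nodup.map_on hinj (Finset.sort_nodup _ _)
    · ext x
      simp [List.mem_toFinset, Finset.mem_image, List.mem_map, Finset.mem_sort]
  exact List.Perm.eq_of_pairwise' (r := (· ≤ ·)) (Finset.pairwise_sort _ _)
    (List.Pairwise.map _ (fun a b hab => Nat.sub_le_sub_right hab j)
      (Finset.pairwise_sort T (· ≤ ·))) hperm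

lemma bI_empty (q : ℝ) (m : ℕ) : bI q m ∅ = 1 := by
  rw [bI, Finset.sort_empty]; rfl

lemma bI_insert (q : ℝ) {m j : ℕ} (hjm : j ≤ m) {T : Finset ℕ} (hT : ∀ x ∈ T, j < x) :
    bI q m (insert j T) = gb q (m + 1) j * bI q (m - j) (T.image (· - j)) := by
  rw [bI, sort_insert_lt hT, bAux_cons, Nat.sub_zero, Nat.sub_zero]
  rw [bAux_shift q m j hjm _ j le_rfl
    (fun x hx => le_of_lt (hT x ((Finset.mem_sort _).mp hx)))]
  rw [Nat.sub_self, ← sort_image_sub (fun x hx => le_of_lt (hT x hx)), ← bI]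

section split
variable {q : ℝ} (hq : 0 < q) (hq1 : q ≠ 1)

include hq hq1 in
lemma bI_split : ∀ (n : ℕ) (S T : Finset ℕ) (m j : ℕ), S.card = n → 1 ≤ j → j ≤ m →
    (∀ x ∈ S, 1 ≤ x ∧ x ≤ j - 1) → (∀ x ∈ T, j + 1 ≤ x ∧ x ≤ m) →
    bI q m (S ∪ insert j T) =
      gb q (m + 1) j * (bI q (j - 1) S * bI q (m - j) (T.image (· - j))) := by
  intro n
  induction n using Nat.strong_induction_on with
  | _ n ih =>
    intro S T m j hcard hj1 hjm hS hT
    rcases S.eq_empty_or_nonempty with hSe | hSne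
    · subst hSe
      rw [Finset.empty_union, bI_empty, one_mul,
        bI_insert q hjm (fun x hx => by have := hT x hx; omega)]
    · set c := S.min' hSne with hc
      have hcS : c ∈ S := S.min'_mem hSne
      have hcb := hS c hcS
      have hcj : c < j := by omega
      have hcm : c ≤ m := by omega
      have hU : S ∪ insert j T = insert c ((S.erase c) ∪ insert j T) := by
        rw [← Finset.insert_union, Finset.insert_erase hcS]
      have hlt : ∀ x ∈ (S.erase c) ∪ insert j T, c < x := by
        intro x hx
        rcases Finset.mem_union.mp hx with hx' | hx'
        · have hxS := Finset.mem_of_mem_erase hx'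
          have hne := Finset.ne_of_mem_erase hx'
          have := S.min'_le x hxS
          omega
        · rcases Finset.mem_insert.mp hx' with rfl | hx''
          · exact hcj
          · have := hT x hx''; omega
      rw [hU, bI_insert q hcm hlt, Finset.image_union, Finset.image_insert]
      have hcard' : ((S.erase c).image (· - c)).card < n := by
        calc ((S.erase c).image (· - c)).card ≤ (S.erase c).card := Finset.card_image_le
        _ = S.card - 1 := Finset.card_erase_of_mem hcS
        _ < n := by have := Finset.card_pos.mpr hSne; omega
      have hrec := ih _ hcard' ((S.erase c).image (· - c)) (T.image (· - c)) (m - c) (j - c)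
        rfl (by omega) (by omega)
        (by
          intro x hx
          obtain ⟨y, hy, rfl⟩ := Finset.mem_image.mp hx
          have h1 := hS y (Finset.mem_of_mem_erase hy)
          have h2 := Finset.ne_of_mem_erase hy
          have h3 := S.min'_le y (Finset.mem_of_mem_erase hy)
          omega)
        (by
          intro x hx
          obtain ⟨y, hy, rfl⟩ := Finset.mem_image.mp hx
          have := hT y hy
          omega)
      rw [show (j : ℕ) - c = j - c from rfl] at hrec
      rw [hrec]
      have himg : ((T.image (· - c)).image (· - (j - c))) = T.image (· - j) := by
        rw [Finset.image_image]
        apply Finset.image_congr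
        intro x hx
        have := hT x hx
        simp only [Function.comp_apply]
        omega
      have hSrw : bI q (j - 1) S = gb q j c * bI q (j - 1 - c) ((S.erase c).image (· - c)) := by
        conv_lhs => rw [← Finset.insert_erase hcS]
        rw [bI_insert q (by omega : c ≤ j - 1)
          (fun x hx => by
            have h1 := Finset.mem_of_mem_erase hx
            have h2 := Finset.ne_of_mem_erase hx
            have h3 := S.min'_le x h1
            omega)]
        rw [show j - 1 + 1 = j by omega]
      rw [himg, hSrw, show m - c - (j - c) = m - j by omega, show j - c - 1 = j - 1 - c by omega]
      have hchain := gb_chain hq hq1 (le_of_lt hcj) (by omega : j ≤ m + 1)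
      rw [show m + 1 - c = m - c + 1 by omega] at hchain
      calc gb q (m + 1) c * (gb q (m - c + 1) (j - c) *
            (bI q (j - 1 - c) ((S.erase c).image (· - c)) * bI q (m - j) (T.image (· - j))))
          = (gb q (m + 1) c * gb q (m - c + 1) (j - c)) *
            (bI q (j - 1 - c) ((S.erase c).image (· - c)) * bI q (m - j) (T.image (· - j))) := by
            ring
        _ = (gb q (m + 1) j * gb q j c) *
            (bI q (j - 1 - c) ((S.erase c).image (· - c)) * bI q (m - j) (T.image (· - j))) := by
            rw [hchain]
        _ = gb q (m + 1) j * (gb q j c * bI q (j - 1 - c) ((S.erase c).image (· - c)) *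
              bI q (m - j) (T.image (· - j))) := by ring
end split
-- sum over powerset of a disjoint union
lemma sum_powerset_union {A : Finset ℕ} : ∀ {B : Finset ℕ}, Disjoint A B → ∀ (f : Finset ℕ → ℝ),
    ∑ I ∈ (A ∪ B).powerset, f I = ∑ S ∈ A.powerset, ∑ T ∈ B.powerset, f (S ∪ T) := by
  induction A using Finset.induction_on with
  | empty => intro B _ f; simp
  | @insert a A ha ih =>
    intro B hAB f
    have haB : a ∉ B := Finset.disjoint_left.mp hAB (Finset.mem_insert_self a A)
    have hAB' : Disjoint A B := Finset.disjoint_of_subset_left (Finset.subset_insert a A) hAB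
    have haAB : a ∉ A ∪ B := by simp [ha, haB]
    rw [Finset.insert_union, Finset.sum_powerset_insert haAB, ih hAB', ih hAB',
      Finset.sum_powerset_insert ha]
    congr 1
    refine Finset.sum_congr rfl fun S _ => Finset.sum_congr rfl fun T _ => ?_
    rw [Finset.insert_union]

-- splitting a powerset sum by the minimum
lemma sum_powerset_min (m : ℕ) (f : Finset ℕ → ℝ) : ∀ (n k : ℕ), m + 1 - k ≤ n →
    ∑ I ∈ (Icc k m).powerset, f I =
      f ∅ + ∑ j ∈ Icc k m, ∑ T ∈ (Icc (j + 1) m).powerset, f (insert j T) := by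
  intro n
  induction n with
  | zero =>
    intro k hk
    rw [show Icc k m = ∅ from Finset.Icc_eq_empty (by omega)]
    simp
  | succ n ihn =>
    intro k hk
    rcases le_or_gt k m with hkm | hkm
    · have hIcc : Icc k m = insert k (Icc (k + 1) m) := by
        ext x; simp only [Finset.mem_Icc, Finset.mem_insert]; omega
      have hknot : k ∉ Icc (k + 1) m := by simp [Finset.mem_Icc]
      rw [hIcc, Finset.sum_powerset_insert hknot, ihn (k + 1) (by omega),
        Finset.sum_insert hknot]
      ring
    · rw [show Icc k m = ∅ from Finset.Icc_eq_empty (by omega)]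
      simp

-- shifting sums over powersets of intervals
lemma sum_shift (j m : ℕ) (F : Finset ℕ → ℝ) :
    ∑ T ∈ (Icc (j + 1) m).powerset, F (T.image (· - j)) =
      ∑ T ∈ (Icc 1 (m - j)).powerset, F T := by
  apply Finset.sum_nbij' (i := fun T => T.image (· - j)) (j := fun T => T.image (· + j))
  · intro T hT
    simp only [Finset.mem_powerset] at *
    intro x hx
    obtain ⟨y, hy, rfl⟩ := Finset.mem_image.mp hx
    have := hT hy
    simp only [Finset.mem_Icc] at *
    omega
  · intro T hT
    simp only [Finset.mem_powerset] at *
    intro x hx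
    obtain ⟨y, hy, rfl⟩ := Finset.mem_image.mp hx
    have := hT hy
    simp only [Finset.mem_Icc] at *
    omega
  · intro T hT
    simp only [Finset.mem_powerset] at hT
    rw [Finset.image_image]
    refine Finset.image_congr (fun x hx => ?_) |>.trans Finset.image_id
    have := hT hx
    simp only [Finset.mem_Icc] at this
    simp only [Function.comp_apply, id_eq]
    omega
  · intro T hT
    rw [Finset.image_image]
    refine Finset.image_congr (fun x hx => ?_) |>.trans Finset.image_id
    simp only [Function.comp_apply, id_eq]
    omega
  · intro T hT; rfl

-- reindex Icc 1 m as range m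
lemma sum_Icc_one (m : ℕ) (h : ℕ → ℝ) :
    ∑ j ∈ Icc 1 m, h j = ∑ i ∈ range m, h (i + 1) := by
  have : Icc 1 m = (range m).image (· + 1) := by
    ext x; simp only [Finset.mem_Icc, Finset.mem_image, Finset.mem_range]
    constructor
    · intro hx; exact ⟨x - 1, by omega, by omega⟩
    · rintro ⟨y, hy, rfl⟩; omega
  rw [this, Finset.sum_image (fun a _ b _ hab => by omega)]
section alt
variable {q : ℝ} (hq : 0 < q) (hq1 : q ≠ 1)

include hq hq1 in
lemma altSum (m : ℕ) :
    ∑ k ∈ range (m + 1), (-1 : ℝ) ^ k * q ^ tri k * gb q (m + 1) (k + 1) = 1 := by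
  rw [Finset.sum_range_succ]
  have hmid : ∀ k ∈ range m, (-1 : ℝ) ^ k * q ^ tri k * gb q (m + 1) (k + 1) =
      (fun k => (-1 : ℝ) ^ k * q ^ tri k * gb q m k) k -
      (fun k => (-1 : ℝ) ^ k * q ^ tri k * gb q m k) (k + 1) := by
    intro k hk
    have hkm : k < m := Finset.mem_range.mp hk
    rw [gb_pascal hq hq1 hkm]
    simp only []
    rw [tri_succ, pow_add, pow_succ]
    ring
  rw [Finset.sum_congr rfl hmid, Finset.sum_range_sub']
  simp only [pow_zero, tri_zero, gb_zero, one_mul, mul_one, gb_self hq hq1]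
  ring

include hq hq1 in
lemma altSum' (m : ℕ) :
    ∑ j ∈ Icc 1 m, gb q (m + 1) j * ((-1 : ℝ) ^ (m - j) * q ^ tri (m - j)) =
      1 - (-1) ^ m * q ^ tri m := by
  rw [sum_Icc_one]
  have h1 : ∀ i ∈ range m, gb q (m + 1) (i + 1) * ((-1 : ℝ) ^ (m - (i + 1)) * q ^ tri (m - (i + 1)))
      = (fun k => gb q (m + 1) (m - k) * ((-1 : ℝ) ^ k * q ^ tri k)) (m - 1 - i) := by
    intro i hi
    have him : i < m := Finset.mem_range.mp hi
    simp only []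
    rw [show m - (i + 1) = m - 1 - i by omega, show m - (m - 1 - i) = i + 1 by omega]
  have step : (∑ x ∈ range m, (fun k => gb q (m + 1) (m - k) * ((-1 : ℝ) ^ k * q ^ tri k))
      (m - 1 - x)) = ∑ k ∈ range m, gb q (m + 1) (m - k) * ((-1 : ℝ) ^ k * q ^ tri k) :=
    Finset.sum_range_reflect (fun k => gb q (m + 1) (m - k) * ((-1 : ℝ) ^ k * q ^ tri k)) m
  rw [Finset.sum_congr rfl h1, step]
  have h2 : ∀ k ∈ range m, gb q (m + 1) (m - k) * ((-1 : ℝ) ^ k * q ^ tri k)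
      = (-1 : ℝ) ^ k * q ^ tri k * gb q (m + 1) (k + 1) := by
    intro k hk
    have hkm : k < m := Finset.mem_range.mp hk
    rw [show m - k = m + 1 - (k + 1) by omega, gb_symm hq hq1 (by omega : k + 1 ≤ m + 1)]
    ring
  rw [Finset.sum_congr rfl h2]
  have := altSum hq hq1 m
  rw [Finset.sum_range_succ, gb_self hq hq1] at this
  have h3 : ∑ k ∈ range m, (-1 : ℝ) ^ k * q ^ tri k * gb q (m + 1) (k + 1) =
      1 - (-1 : ℝ) ^ m * q ^ tri m := by
    rw [mul_one] at this; linarith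
  rw [h3]
end alt
section key
variable {q : ℝ} (hq : 0 < q) (hq1 : q ≠ 1)

include hq hq1 in
theorem keyK : ∀ (m : ℕ) (J : Finset ℕ), J ⊆ Icc 1 m →
    ∑ I ∈ (Icc 1 m).powerset, (if J ⊆ I then (-1 : ℝ) ^ I.card * bI q m I else 0)
      = (-1) ^ m * q ^ tri m * bI q⁻¹ m J := by
  intro m
  induction m using Nat.strong_induction_on with
  | _ m ih =>
  intro J hJ
  rcases J.eq_empty_or_nonempty with rfl | hJne
  · -- J = ∅
    simp only [Finset.empty_subset, if_true]
    rw [bI_empty, mul_one]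
    rw [sum_powerset_min m (fun I => (-1 : ℝ) ^ I.card * bI q m I) (m + 1) 1 (by omega)]
    have hinner : ∀ j ∈ Icc 1 m,
        (∑ T ∈ (Icc (j + 1) m).powerset, (-1 : ℝ) ^ (insert j T).card * bI q m (insert j T))
        = -(gb q (m + 1) j * ((-1) ^ (m - j) * q ^ tri (m - j))) := by
      intro j hj
      obtain ⟨hj1, hjm⟩ := Finset.mem_Icc.mp hj
      have hstep : ∀ T ∈ (Icc (j + 1) m).powerset,
          (-1 : ℝ) ^ (insert j T).card * bI q m (insert j T)
          = (gb q (m + 1) j * (-1)) *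
            ((-1 : ℝ) ^ (T.image (· - j)).card * bI q (m - j) (T.image (· - j))) := by
        intro T hT
        have hTsub := Finset.mem_powerset.mp hT
        have hTx : ∀ x ∈ T, j < x := fun x hx => by
          have := Finset.mem_Icc.mp (hTsub hx); omega
        have hjT : j ∉ T := fun h => by have := hTx j h; omega
        rw [Finset.card_insert_of_notMem hjT, bI_insert q hjm hTx,
          Finset.card_image_of_injOn (fun x hx y hy hxy => by
            have := hTx x hx; have := hTx y hy; omega)]
        ring
      rw [Finset.sum_congr rfl hstep, ← Finset.mul_sum,
        sum_shift j m (fun T' => (-1 : ℝ) ^ T'.card * bI q (m - j) T')]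
      have hih := ih (m - j) (by omega) ∅ (Finset.empty_subset _)
      simp only [Finset.empty_subset, if_true] at hih
      rw [hih, bI_empty, mul_one]
      ring
    rw [Finset.sum_congr rfl hinner, Finset.sum_neg_distrib, altSum' hq hq1 m]
    simp only [Finset.card_empty, pow_zero, bI_empty, one_mul, mul_one]
    ring
  · -- J nonempty
    set j := J.min' hJne with hjdef
    have hjJ : j ∈ J := J.min'_mem hJne
    obtain ⟨hj1, hjm⟩ := Finset.mem_Icc.mp (hJ hjJ)
    set J' := J.erase j with hJ'def
    have hJ'lt : ∀ x ∈ J', j < x := by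
      intro x hx
      have h1 := Finset.mem_of_mem_erase hx
      have h2 := Finset.ne_of_mem_erase hx
      have h3 := J.min'_le x h1
      omega
    have hJ'sub : J' ⊆ Icc (j + 1) m := by
      intro x hx
      have h4 := Finset.mem_Icc.mp (hJ (Finset.mem_of_mem_erase hx))
      have := hJ'lt x hx
      simp only [Finset.mem_Icc]
      omega
    set J'' := J'.image (· - j) with hJ''def
    have hJ''sub : J'' ⊆ Icc 1 (m - j) := by
      intro x hx
      obtain ⟨y, hy, rfl⟩ := Finset.mem_image.mp hx
      have := Finset.mem_Icc.mp (hJ'sub hy)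
      simp only [Finset.mem_Icc]
      omega
    have hdecomp : Icc 1 m = Icc 1 (j - 1) ∪ Icc j m := by
      ext x; simp only [Finset.mem_Icc, Finset.mem_union]; omega
    have hdisj : Disjoint (Icc 1 (j - 1)) (Icc j m) := by
      rw [Finset.disjoint_left]
      intro a ha hb
      have := Finset.mem_Icc.mp ha
      have := Finset.mem_Icc.mp hb
      omega
    have hIccj : Icc j m = insert j (Icc (j + 1) m) := by
      ext x; simp only [Finset.mem_Icc, Finset.mem_insert]; omega
    have hjnot : j ∉ Icc (j + 1) m := by simp [Finset.mem_Icc]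
    rw [hdecomp, sum_powerset_union hdisj]
    have houter : ∀ S ∈ (Icc 1 (j - 1)).powerset,
        (∑ T' ∈ (Icc j m).powerset, (if J ⊆ S ∪ T' then (-1 : ℝ) ^ (S ∪ T').card * bI q m (S ∪ T') else 0))
        = ((-1 : ℝ) ^ S.card * bI q (j - 1) S) *
          ((gb q (m + 1) j * (-1)) * ((-1) ^ (m - j) * q ^ tri (m - j) * bI q⁻¹ (m - j) J'')) := by
      intro S hS
      have hSsub := Finset.mem_powerset.mp hS
      have hSx : ∀ x ∈ S, 1 ≤ x ∧ x ≤ j - 1 := fun x hx => Finset.mem_Icc.mp (hSsub hx)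
      have hjS : j ∉ S := fun h => by have := hSx j h; omega
      rw [hIccj, Finset.sum_powerset_insert hjnot]
      have hzero : ∀ T ∈ (Icc (j + 1) m).powerset,
          (if J ⊆ S ∪ T then (-1 : ℝ) ^ (S ∪ T).card * bI q m (S ∪ T) else 0) = 0 := by
        intro T hT
        have hTsub := Finset.mem_powerset.mp hT
        apply if_neg
        intro hcon
        rcases Finset.mem_union.mp (hcon hjJ) with h | h
        · exact hjS h
        · exact hjnot (hTsub h)
      rw [Finset.sum_congr rfl hzero, Finset.sum_const_zero, zero_add]
      have hmain : ∀ T ∈ (Icc (j + 1) m).powerset,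
          (if J ⊆ S ∪ insert j T then (-1 : ℝ) ^ (S ∪ insert j T).card * bI q m (S ∪ insert j T) else 0)
          = ((-1 : ℝ) ^ S.card * bI q (j - 1) S) * ((gb q (m + 1) j * (-1)) *
              (if J'' ⊆ T.image (· - j)
                then (-1 : ℝ) ^ (T.image (· - j)).card * bI q (m - j) (T.image (· - j)) else 0)) := by
        intro T hT
        have hTsub := Finset.mem_powerset.mp hT
        have hTx : ∀ x ∈ T, j + 1 ≤ x ∧ x ≤ m := fun x hx => Finset.mem_Icc.mp (hTsub hx)
        have hTgt : ∀ x ∈ T, j < x := fun x hx => by have := hTx x hx; omega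
        have hjT : j ∉ T := fun h => by have := hTgt j h; omega
        have hcond : (J ⊆ S ∪ insert j T) ↔ (J'' ⊆ T.image (· - j)) := by
          constructor
          · intro hc x hx
            obtain ⟨y, hy, rfl⟩ := Finset.mem_image.mp hx
            have hyJ : y ∈ J := Finset.mem_of_mem_erase hy
            have hygt := hJ'lt y hy
            rcases Finset.mem_union.mp (hc hyJ) with h | h
            · exact absurd (hSx y h) (by omega)
            · rcases Finset.mem_insert.mp h with rfl | h'
              · omega
              · exact Finset.mem_image_of_mem _ h'
          · intro hc x hx
            rcases eq_or_ne x j with rfl | hne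
            · exact Finset.mem_union_right _ (Finset.mem_insert_self _ _)
            · have hx' : x ∈ J' := Finset.mem_erase.mpr ⟨hne, hx⟩
              have hgt := hJ'lt x hx'
              have hmem : x - j ∈ T.image (· - j) :=
                hc (Finset.mem_image_of_mem _ hx')
              obtain ⟨y, hy, hxy⟩ := Finset.mem_image.mp hmem
              have := hTgt y hy
              have : y = x := by omega
              subst this
              exact Finset.mem_union_right _ (Finset.mem_insert_of_mem hy)
        by_cases hc : J'' ⊆ T.image (· - j)
        · rw [if_pos (hcond.mpr hc), if_pos hc]
          have hdisjS : Disjoint S (insert j T) := by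
            rw [Finset.disjoint_left]
            intro a ha hb
            have := hSx a ha
            rcases Finset.mem_insert.mp hb with rfl | hb'
            · omega
            · have := hTx a hb'; omega
          have hcard : (S ∪ insert j T).card = S.card + T.card + 1 := by
            rw [Finset.card_union_of_disjoint hdisjS, Finset.card_insert_of_notMem hjT]
            omega
          rw [hcard, bI_split hq hq1 S.card S T m j rfl hj1 hjm hSx hTx,
            Finset.card_image_of_injOn (fun x hx y hy hxy => by
              have := hTgt x hx; have := hTgt y hy; omega)]
          ring
        · rw [if_neg (fun h => hc (hcond.mp h)), if_neg hc]
          ring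
      rw [Finset.sum_congr rfl hmain, ← Finset.mul_sum, ← Finset.mul_sum,
        sum_shift j m (fun T'' => if J'' ⊆ T''
          then (-1 : ℝ) ^ T''.card * bI q (m - j) T'' else 0),
        ih (m - j) (by omega) J'' hJ''sub]
    rw [Finset.sum_congr rfl houter, ← Finset.sum_mul]
    have hSsum := ih (j - 1) (by omega) ∅ (Finset.empty_subset _)
    simp only [Finset.empty_subset, if_true] at hSsum
    rw [hSsum, bI_empty, mul_one]
    -- now the scalar identity
    have hJins : insert j J' = J := Finset.insert_erase hjJ
    have hbJ : bI q⁻¹ m J = gb q⁻¹ (m + 1) j * bI q⁻¹ (m - j) J'' := by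
      rw [← hJins, bI_insert q⁻¹ hjm hJ'lt]
    rw [hbJ, gb_inv hq hq1 (by omega : j ≤ m + 1), show m + 1 - j = m + 1 - j from rfl]
    have hsign : ((-1 : ℝ)) ^ (j - 1) * (-1) ^ (m - j) * (-1) = (-1) ^ m := by
      rw [mul_assoc, ← pow_succ, ← pow_add, show j - 1 + (m - j + 1) = m by omega]
    have hexp : q ^ tri (j - 1) * q ^ tri (m - j) * q ^ (j * (m + 1 - j)) = q ^ tri m := by
      rw [← pow_add, ← pow_add]
      congr 1
      have := tri_add (j - 1) (m - j)
      rw [show j - 1 + 1 = j by omega, show m - j + 1 = m + 1 - j by omega,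
        show j - 1 + (m - j) + 1 = m by omega] at this
      exact this
    rw [← hsign, ← hexp]
    have hqj : q ^ (j * (m + 1 - j)) ≠ 0 := pow_ne_zero _ (ne_of_gt hq)
    field_simp
end key
lemma prod_neg_fin (I : Finset ℕ) (f : ℕ → ℝ) :
    ∏ i ∈ I, (-(f i)) = (-1 : ℝ) ^ I.card * ∏ i ∈ I, f i := by
  have : ∀ i ∈ I, -(f i) = (-1) * f i := fun i _ => by ring
  rw [Finset.prod_congr rfl this, Finset.prod_mul_distrib, Finset.prod_const]

/-- Inversion symmetry of the Igusa factor: inverting `p` and all the variables `U_i`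
multiplies `I_m` by `(−1)^m p^{m(m+1)/2}`. -/
theorem igusa_factor_inversion (m : ℕ) (hm : 1 ≤ m) (p : ℝ) (hp : 0 < p) (hp1 : p ≠ 1)
    (U : ℕ → ℝ) (hU0 : ∀ i, 1 ≤ i → i ≤ m → U i ≠ 0) (hU1 : ∀ i, 1 ≤ i → i ≤ m → U i ≠ 1) :
    igusa p⁻¹ m (fun i => (U i)⁻¹) = (-1) ^ m * p ^ (m * (m + 1) / 2) * igusa p m U := by
  rw [igusa, igusa, inv_inv]
  have hstep : ∀ I ∈ (Icc 1 m).powerset,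
      bI p m I * ∏ i ∈ I, (U i)⁻¹ / (1 - (U i)⁻¹)
      = ∑ J ∈ (Icc 1 m).powerset,
          (if J ⊆ I then ((-1 : ℝ) ^ I.card * bI p m I) * ∏ i ∈ J, U i / (1 - U i) else 0) := by
    intro I hI
    have hIsub := Finset.mem_powerset.mp hI
    have hfac : ∀ i ∈ I, (U i)⁻¹ / (1 - (U i)⁻¹) = -(U i / (1 - U i) + 1) := by
      intro i hi
      have hi' := Finset.mem_Icc.mp (hIsub hi)
      have h0 := hU0 i hi'.1 hi'.2
      have h1 : (1 : ℝ) - U i ≠ 0 := sub_ne_zero.mpr (Ne.symm (hU1 i hi'.1 hi'.2))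
      have hden : (1 : ℝ) - (U i)⁻¹ ≠ 0 := by
        rw [sub_ne_zero]
        intro h
        exact hU1 i hi'.1 hi'.2 (inv_eq_one.mp h.symm)
      rw [div_eq_iff hden]
      field_simp
      ring
    have hfil : (Icc 1 m).powerset.filter (· ⊆ I) = I.powerset := by
      ext J
      simp only [Finset.mem_filter, Finset.mem_powerset]
      exact ⟨fun h => h.2, fun h => ⟨h.trans hIsub, h⟩⟩
    calc bI p m I * ∏ i ∈ I, (U i)⁻¹ / (1 - (U i)⁻¹)
        = bI p m I * ∏ i ∈ I, (-(U i / (1 - U i) + 1)) := by rw [Finset.prod_congr rfl hfac]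
      _ = bI p m I * ((-1 : ℝ) ^ I.card * ∏ i ∈ I, (U i / (1 - U i) + 1)) := by
          rw [prod_neg_fin]
      _ = bI p m I * ((-1 : ℝ) ^ I.card *
            ∑ J ∈ I.powerset, ∏ i ∈ J, U i / (1 - U i)) := by
          rw [Finset.prod_add]
          congr 1
          refine congrArg _ (Finset.sum_congr rfl fun J _ => ?_)
          rw [Finset.prod_const_one, mul_one]
      _ = ∑ J ∈ I.powerset, ((-1 : ℝ) ^ I.card * bI p m I) * ∏ i ∈ J, U i / (1 - U i) := by
          rw [Finset.mul_sum, Finset.mul_sum]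
          exact Finset.sum_congr rfl fun J _ => by ring
      _ = ∑ J ∈ (Icc 1 m).powerset,
            (if J ⊆ I then ((-1 : ℝ) ^ I.card * bI p m I) * ∏ i ∈ J, U i / (1 - U i) else 0) := by
          rw [← hfil, Finset.sum_filter]
  rw [Finset.sum_congr rfl hstep, Finset.sum_comm]
  have h2 : ∀ J ∈ (Icc 1 m).powerset,
      (∑ I ∈ (Icc 1 m).powerset,
        (if J ⊆ I then ((-1 : ℝ) ^ I.card * bI p m I) * ∏ i ∈ J, U i / (1 - U i) else 0))
      = ((-1 : ℝ) ^ m * p ^ tri m) * (bI p⁻¹ m J * ∏ i ∈ J, U i / (1 - U i)) := by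
    intro J hJ
    have e1 : ∀ I ∈ (Icc 1 m).powerset,
        (if J ⊆ I then ((-1 : ℝ) ^ I.card * bI p m I) * ∏ i ∈ J, U i / (1 - U i) else 0)
        = (if J ⊆ I then (-1 : ℝ) ^ I.card * bI p m I else 0) * ∏ i ∈ J, U i / (1 - U i) := by
      intro I _
      by_cases h : J ⊆ I <;> simp [h]
    rw [Finset.sum_congr rfl e1, ← Finset.sum_mul,
      keyK hp hp1 m J (Finset.mem_powerset.mp hJ)]
    ring
  rw [Finset.sum_congr rfl h2, ← Finset.mul_sum,
    show m * (m + 1) / 2 = tri m from rfl]
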